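/- Let K₀, K₁ be symmetric positive definite n×n matrices with Cholesky factors L₀, L₁, and suppose M := L₀⁻¹ K₁ L₀⁻ᵀ has distinct eigenvalues with eigendecomposition M = P₁ D₁ P₁ᵀ (P₁ orthogonal, D₁ diagonal with increasing entries). If B₀ satisfies K₁ = B₀ᵀ K₀ B₀ and also K₂ = B₀ᵀ K₁ B₀ where L₁⁻¹ K₂ L₁⁻ᵀ = P₂ D₂ P₂ᵀ with D₂ diagonal increasing and P₂ orthogonal, then B₀ = L₀⁻ᵀ P₁ W₀ P₂ᵀ L₁ᵀ for some diagonal matrix W₀ with diagonal entries ±1. -/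
import Mathlib


open Matrix


/-- If Q is orthogonal and conjugates diagonal d₁ to diagonal d₂ with both strictly
increasing, then Q is a diagonal sign matrix. -/
theorem sign_matrix_of_conj
    {n : ℕ} (Q : Matrix (Fin n) (Fin n) ℝ) (d₁ d₂ : Fin n → ℝ)
    (hd₁ : StrictMono d₁) (hd₂ : StrictMono d₂)
    (hQQ : Q * Qᵀ = 1) (hconj : Matrix.diagonal d₁ * Q = Q * Matrix.diagonal d₂) :
    ∃ w : Fin n → ℝ, (∀ i, w i = 1 ∨ w i = -1) ∧ Q = Matrix.diagonal w := by
  have hQtQ : Qᵀ * Q = 1 := mul_eq_one_comm.mp hQQ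
  have hentry : ∀ i j, d₁ i * Q i j = Q i j * d₂ j := by
    intro i j
    have h1 : (Matrix.diagonal d₁ * Q) i j = (Q * Matrix.diagonal d₂) i j := by rw [hconj]
    rwa [Matrix.diagonal_mul, Matrix.mul_diagonal] at h1
  have hzero : ∀ i j, d₁ i ≠ d₂ j → Q i j = 0 := by
    intro i j hne
    have h := hentry i j
    rw [mul_comm (Q i j) (d₂ j)] at h
    have : (d₁ i - d₂ j) * Q i j = 0 := by ring_nf; linarith [h]
    rcases mul_eq_zero.mp this with h' | h'
    · exact absurd (by linarith : d₁ i = d₂ j) hne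
    · exact h'
  have hrow : ∀ i, ∃ j, Q i j ≠ 0 := by
    intro i
    by_contra h
    push_neg at h
    have h1 := congrFun (congrFun hQQ i) i
    simp [Matrix.mul_apply, Matrix.one_apply, h] at h1
  choose f hf using hrow
  have hd : ∀ i, d₁ i = d₂ (f i) := by
    intro i
    by_contra hne
    exact hf i (hzero i (f i) hne)
  have hfmono : StrictMono f := by
    intro i j hij
    have : d₂ (f i) < d₂ (f j) := by rw [← hd, ← hd]; exact hd₁ hij
    exact hd₂.lt_iff_lt.mp this
  have hfinj : Function.Injective f := hfmono.injective
  have hfsurj : Function.Surjective f := Finite.surjective_of_injective hfinj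
  have hfid : f = id := by
    have : Set.range f = Set.range (id : Fin n → Fin n) := by
      rw [Set.range_id, Set.range_eq_univ.mpr hfsurj]
    exact (@StrictMono.range_inj (Fin n) (Fin n) _ _ (inferInstanceAs (WellFoundedLT (Fin n))) f id hfmono strictMono_id).1 this
  have hdiageq : ∀ i, d₁ i = d₂ i := by
    intro i; have := hd i; rwa [hfid] at this
  have hoff : ∀ i j, i ≠ j → Q i j = 0 := by
    intro i j hij
    apply hzero
    rw [hdiageq i]
    exact fun h => hij (hd₂.injective h)
  refine ⟨fun i => Q i i, ?_, ?_⟩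
  · intro i
    have h1 := congrFun (congrFun hQtQ i) i
    have : ∑ k, Q k i * Q k i = 1 := by
      simpa [Matrix.mul_apply, Matrix.transpose_apply, Matrix.one_apply] using h1
    have hsum : ∑ k, Q k i * Q k i = Q i i * Q i i := by
      rw [Finset.sum_eq_single i]
      · intro k _ hk; rw [hoff k i hk]; ring
      · intro h; exact absurd (Finset.mem_univ i) h
    rw [hsum] at this
    exact mul_self_eq_one_iff.mp this
  · ext i j
    by_cases h : i = j
    · subst h; simp
    · rw [hoff i j h, Matrix.diagonal_apply_ne _ h]


theorem qwendy_step2_characterization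
    (n : ℕ) (K₀ K₁ K₂ L₀ L₁ B₀ : Matrix (Fin n) (Fin n) ℝ)
    (P₁ P₂ : Matrix (Fin n) (Fin n) ℝ) (d₁ d₂ : Fin n → ℝ)
    (hK₀ : K₀.PosDef) (hK₁ : K₁.PosDef) (hK₂ : K₂.PosDef)
    (hL₀ : ∀ i j, i < j → L₀ i j = 0) (hL₁ : ∀ i j, i < j → L₁ i j = 0)
    (hc₀ : K₀ = L₀ * L₀ᵀ) (hc₁ : K₁ = L₁ * L₁ᵀ)
    (hP₁ : P₁ * P₁ᵀ = 1) (hP₂ : P₂ * P₂ᵀ = 1)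
    (hd₁ : StrictMono d₁) (hd₂ : StrictMono d₂)
    (hdec₁ : L₀⁻¹ * K₁ * (L₀⁻¹)ᵀ = P₁ * Matrix.diagonal d₁ * P₁ᵀ)
    (hdec₂ : L₁⁻¹ * K₂ * (L₁⁻¹)ᵀ = P₂ * Matrix.diagonal d₂ * P₂ᵀ)
    (hB1 : K₁ = B₀ᵀ * K₀ * B₀) (hB2 : K₂ = B₀ᵀ * K₁ * B₀) :
    ∃ w : Fin n → ℝ, (∀ i, w i = 1 ∨ w i = -1) ∧
      B₀ = (L₀⁻¹)ᵀ * P₁ * Matrix.diagonal w * P₂ᵀ * L₁ᵀ := by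
  have hcl : ∀ {X Y : Matrix (Fin n) (Fin n) ℝ}, X * Y = 1 →
      ∀ Z : Matrix (Fin n) (Fin n) ℝ, X * (Y * Z) = Z := by
    intro X Y h Z; rw [← Matrix.mul_assoc, h, Matrix.one_mul]
  have hdet₀ : IsUnit L₀.det := by
    have h := hK₀.det_pos
    rw [hc₀, Matrix.det_mul, Matrix.det_transpose] at h
    exact isUnit_iff_ne_zero.mpr fun hz => by rw [hz] at h; simp at h
  have hdet₁ : IsUnit L₁.det := by
    have h := hK₁.det_pos
    rw [hc₁, Matrix.det_mul, Matrix.det_transpose] at h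
    exact isUnit_iff_ne_zero.mpr fun hz => by rw [hz] at h; simp at h
  have hdet₀t : IsUnit L₀ᵀ.det := by rwa [Matrix.det_transpose]
  have hdet₁t : IsUnit L₁ᵀ.det := by rwa [Matrix.det_transpose]
  have h01 : L₀⁻¹ * L₀ = 1 := Matrix.nonsing_inv_mul _ hdet₀
  have h03 : (L₀ᵀ)⁻¹ * L₀ᵀ = 1 := Matrix.nonsing_inv_mul _ hdet₀t
  have h04 : L₀ᵀ * (L₀ᵀ)⁻¹ = 1 := Matrix.mul_nonsing_inv _ hdet₀t
  have h11 : L₁⁻¹ * L₁ = 1 := Matrix.nonsing_inv_mul _ hdet₁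
  have h13 : (L₁ᵀ)⁻¹ * L₁ᵀ = 1 := Matrix.nonsing_inv_mul _ hdet₁t
  have h14 : L₁ᵀ * (L₁ᵀ)⁻¹ = 1 := Matrix.mul_nonsing_inv _ hdet₁t
  set C : Matrix (Fin n) (Fin n) ℝ := L₀ᵀ * B₀ * (L₁ᵀ)⁻¹ with hC
  have hCt : Cᵀ = L₁⁻¹ * B₀ᵀ * L₀ := by
    rw [hC]
    simp [Matrix.transpose_mul, Matrix.transpose_nonsing_inv, Matrix.mul_assoc]
  have hB₀ : B₀ = (L₀ᵀ)⁻¹ * (C * L₁ᵀ) := by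
    have : (L₀ᵀ)⁻¹ * (C * L₁ᵀ) = B₀ := by
      rw [hC]
      simp only [Matrix.mul_assoc]
      rw [hcl h03, h13, Matrix.mul_one]
    exact this.symm
  have hCtC : Cᵀ * C = 1 := by
    rw [hCt, hC]
    have e1 : L₁⁻¹ * B₀ᵀ * L₀ * (L₀ᵀ * B₀ * (L₁ᵀ)⁻¹)
        = L₁⁻¹ * (B₀ᵀ * K₀ * B₀) * (L₁ᵀ)⁻¹ := by
      rw [hc₀]; simp only [Matrix.mul_assoc]
    rw [e1, ← hB1, hc₁]
    simp only [Matrix.mul_assoc]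
    rw [h14, Matrix.mul_one, h11]
  have hCCt : C * Cᵀ = 1 := mul_eq_one_comm.mp hCtC
  have hBL : B₀ * (L₁ᵀ)⁻¹ = (L₀ᵀ)⁻¹ * C := by
    rw [hB₀]
    simp only [Matrix.mul_assoc]
    rw [h14, Matrix.mul_one]
  have hLB : L₁⁻¹ * B₀ᵀ = Cᵀ * L₀⁻¹ := by
    rw [hB₀]
    simp only [Matrix.transpose_mul, Matrix.transpose_nonsing_inv,
      Matrix.transpose_transpose, Matrix.mul_assoc]
    rw [hcl h11]
  have hkey : Cᵀ * (P₁ * Matrix.diagonal d₁ * P₁ᵀ) * C = P₂ * Matrix.diagonal d₂ * P₂ᵀ := by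
    rw [← hdec₁, ← hdec₂, hB2]
    rw [Matrix.transpose_nonsing_inv, Matrix.transpose_nonsing_inv]
    have e2 : L₁⁻¹ * (B₀ᵀ * K₁ * B₀) * (L₁ᵀ)⁻¹
        = (L₁⁻¹ * B₀ᵀ) * K₁ * (B₀ * (L₁ᵀ)⁻¹) := by
      simp only [Matrix.mul_assoc]
    rw [e2, hLB, hBL]
    simp only [Matrix.mul_assoc]
  set Q : Matrix (Fin n) (Fin n) ℝ := P₁ᵀ * C * P₂ with hQ
  have hP₁t : P₁ᵀ * P₁ = 1 := mul_eq_one_comm.mp hP₁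
  have hP₂t : P₂ᵀ * P₂ = 1 := mul_eq_one_comm.mp hP₂
  have hQtQ : Qᵀ * Q = 1 := by
    rw [hQ]
    simp only [Matrix.transpose_mul, Matrix.transpose_transpose, Matrix.mul_assoc]
    rw [hcl hP₁, hcl hCtC, hP₂t]
  have hQQt : Q * Qᵀ = 1 := mul_eq_one_comm.mp hQtQ
  have step1 : Qᵀ * Matrix.diagonal d₁ * Q
      = P₂ᵀ * (Cᵀ * (P₁ * Matrix.diagonal d₁ * P₁ᵀ) * C) * P₂ := by
    rw [hQ]
    simp only [Matrix.transpose_mul, Matrix.transpose_transpose, Matrix.mul_assoc]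
  have hQD : Qᵀ * Matrix.diagonal d₁ * Q = Matrix.diagonal d₂ := by
    rw [step1, hkey]
    simp only [Matrix.mul_assoc]
    rw [hP₂t, Matrix.mul_one, hcl hP₂t]
  have hconj : Matrix.diagonal d₁ * Q = Q * Matrix.diagonal d₂ := by
    have h := congrArg (fun X => Q * X) hQD
    simp only [← Matrix.mul_assoc] at h
    rw [hQQt, Matrix.one_mul] at h
    exact h
  obtain ⟨w, hw, hQdiag⟩ := sign_matrix_of_conj Q d₁ d₂ hd₁ hd₂ hQQt hconj
  refine ⟨w, hw, ?_⟩
  have hCeq : C = P₁ * Matrix.diagonal w * P₂ᵀ := by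
    rw [← hQdiag, hQ]
    simp only [Matrix.mul_assoc]
    rw [hP₂, Matrix.mul_one, hcl hP₁]
  rw [Matrix.transpose_nonsing_inv, hB₀, hCeq]
  simp only [Matrix.mul_assoc]
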